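/- If x > 5 or y > 3 (with x, y positive integers), then |2^x - 3^y| > 10. -/
import Mathlib

-- Periodicity of powers modulo N
lemma pow_period (a N : ℤ) (s P x : ℕ) (h : a ^ (s + P) ≡ a ^ s [ZMOD N]) (hx : s ≤ x) :
    a ^ x ≡ a ^ (s + (x - s) % P) [ZMOD N] := by
  have key : ∀ q r : ℕ, a ^ (s + r + P * q) ≡ a ^ (s + r) [ZMOD N] := by
    intro q r
    induction q with
    | zero => simp
    | succ q ih =>
      have h1 : a ^ (s + P + r) ≡ a ^ (s + r) [ZMOD N] := by
        have := h.mul_right (a ^ r)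
        rwa [← pow_add, ← pow_add] at this
      calc a ^ (s + r + P * (q + 1)) = a ^ (s + P + r) * a ^ (P * q) := by
            rw [← pow_add]; ring_nf
        _ ≡ a ^ (s + r) * a ^ (P * q) [ZMOD N] := h1.mul_right _
        _ = a ^ (s + r + P * q) := by rw [← pow_add]
        _ ≡ a ^ (s + r) [ZMOD N] := ih
  have hd : x = s + (x - s) % P + P * ((x - s) / P) := by
    have := Nat.div_add_mod (x - s) P
    omega
  calc a ^ x = a ^ (s + (x - s) % P + P * ((x - s) / P)) := by rw [← hd]
    _ ≡ a ^ (s + (x - s) % P) [ZMOD N] := key _ _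

lemma modeq_of_nat (a s P N : ℕ) (h : a ^ (s + P) % N = a ^ s % N) :
    ((a : ℤ)) ^ (s + P) ≡ (a : ℤ) ^ s [ZMOD (N : ℤ)] := by
  have := congrArg (Nat.cast : ℕ → ℤ) h
  push_cast at this
  exact this

lemma nat_sub_modeq (a b : ℕ) :
    ((a : ℤ) - b) ≡ ((a % 88128 + 88128 - b % 88128) % 88128 : ℕ) [ZMOD 88128] := by
  show _ % _ = _ % _
  omega

set_option maxRecDepth 20000 in
lemma chk : ∀ r2 < 216, ∀ r3 < 16,
    10 < (2 ^ (6 + r2) % 88128 + 88128 - 3 ^ (4 + r3) % 88128) % 88128 ∧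
    (2 ^ (6 + r2) % 88128 + 88128 - 3 ^ (4 + r3) % 88128) % 88128 < 88118 := by decide

theorem herschfeld_consequence (x y : ℕ) (hx : 0 < x) (hy : 0 < y)
    (h : 5 < x ∨ 3 < y) : 10 < |(2 : ℤ)^x - 3^y| := by
  by_contra hc
  push_neg at hc
  obtain ⟨habs1, habs2⟩ := abs_le.mp hc
  have hxy : 6 ≤ x ∧ 4 ≤ y := by
    constructor
    · by_contra hx6
      push_neg at hx6
      have h4 : 4 ≤ y := by
        rcases h with h6 | h4
        · omega
        · omega
      have h2 : (2:ℤ)^x ≤ 2^5 := pow_le_pow_right₀ (by norm_num) (by omega)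
      have h3 : (3:ℤ)^4 ≤ 3^y := pow_le_pow_right₀ (by norm_num) (by omega)
      norm_num at h2 h3
      linarith
    · by_contra hy4
      push_neg at hy4
      have h6 : 6 ≤ x := by
        rcases h with h6 | h4
        · omega
        · omega
      have h2 : (2:ℤ)^6 ≤ 2^x := pow_le_pow_right₀ (by norm_num) (by omega)
      have h3 : (3:ℤ)^y ≤ 3^3 := pow_le_pow_right₀ (by norm_num) (by omega)
      norm_num at h2 h3
      linarith
  obtain ⟨hx6, hy4⟩ := hxy
  have m2 : (2:ℤ)^x ≡ 2 ^ (6 + (x - 6) % 216) [ZMOD 88128] := by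
    have hb : ((2:ℕ):ℤ) ^ (6 + 216) ≡ ((2:ℕ):ℤ) ^ 6 [ZMOD ((88128:ℕ):ℤ)] :=
      modeq_of_nat 2 6 216 88128 (by norm_num)
    exact pow_period 2 88128 6 216 x (by exact_mod_cast hb) hx6
  have m3 : (3:ℤ)^y ≡ 3 ^ (4 + (y - 4) % 16) [ZMOD 88128] := by
    have hb : ((3:ℕ):ℤ) ^ (4 + 16) ≡ ((3:ℕ):ℤ) ^ 4 [ZMOD ((88128:ℕ):ℤ)] :=
      modeq_of_nat 3 4 16 88128 (by norm_num)
    exact pow_period 3 88128 4 16 y (by exact_mod_cast hb) hy4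
  set r2 := (x - 6) % 216 with hr2
  set r3 := (y - 4) % 16 with hr3
  have hr2' : r2 < 216 := Nat.mod_lt _ (by norm_num)
  have hr3' : r3 < 16 := Nat.mod_lt _ (by norm_num)
  obtain ⟨hv1, hv2⟩ := chk r2 hr2' r3 hr3'
  set v : ℕ := (2 ^ (6 + r2) % 88128 + 88128 - 3 ^ (4 + r3) % 88128) % 88128 with hv
  have mv : ((2:ℤ) ^ (6 + r2) - 3 ^ (4 + r3)) ≡ (v : ℤ) [ZMOD 88128] := by
    have := nat_sub_modeq (2 ^ (6 + r2)) (3 ^ (4 + r3))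
    push_cast at this ⊢
    exact this
  have mfinal : ((2:ℤ)^x - 3^y) ≡ (v : ℤ) [ZMOD 88128] := (m2.sub m3).trans mv
  have hdvd : (88128:ℤ) ∣ ((2:ℤ)^x - 3^y) - v := Int.ModEq.dvd mfinal.symm
  have hvz1 : (10:ℤ) < v := by exact_mod_cast hv1
  have hvz2 : (v:ℤ) < 88118 := by exact_mod_cast hv2
  have hne : ((2:ℤ)^x - 3^y) - v ≠ 0 := by omega
  have habs : |((2:ℤ)^x - 3^y) - v| < 88128 := by
    rw [abs_lt]; omega
  have := Int.eq_zero_of_abs_lt_dvd hdvd habs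
  exact hne this
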